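/- Let α ∈ 𝕋 be non-periodic under the doubling map, let n ≥ 1, and let x ∈ 𝕋 satisfy h^{n+1}(x) ≠ α (so that GCS_n(x) and GCS_{n−1}(h(x)) are both defined). Then h(GCS_n(x)) = GCS_{n−1}(h(x)). -/

import Mathlib

open Set MeasureTheory Filter
open scoped Classical

noncomputable section

/-- The circle `ℝ/ℤ`. -/
abbrev 𝕋 := AddCircle (1 : ℝ)

/-- The doubling map `h(x) = 2x` on the circle. -/
def dbl (x : 𝕋) : 𝕋 := x + x

/-- The representative of a point of the circle lying in `[0,1)`. -/
def rep (x : 𝕋) : ℝ := (AddCircle.equivIco 1 0 x : ℝ)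

/-- `⋆₁ = α/2`. -/
def star1 (α : 𝕋) : 𝕋 := ((rep α / 2 : ℝ) : 𝕋)

/-- `⋆₂ = α/2 + 1/2`. -/
def star2 (α : 𝕋) : 𝕋 := ((rep α / 2 + 1 / 2 : ℝ) : 𝕋)

/-- The closed semicircle `C(L) = {α/2 + t : t ∈ [0,1/2]}`. -/
def arcL (α : 𝕋) : Set 𝕋 := (fun t : ℝ => ((rep α / 2 + t : ℝ) : 𝕋)) '' Set.Icc 0 (1 / 2)

/-- The closed semicircle `C(R) = {α/2 + 1/2 + t : t ∈ [0,1/2]}`. -/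
def arcR (α : 𝕋) : Set 𝕋 :=
  (fun t : ℝ => ((rep α / 2 + 1 / 2 + t : ℝ) : 𝕋)) '' Set.Icc 0 (1 / 2)

/-- The open semicircle `{α/2 + t : t ∈ (0,1/2)}`. -/
def openArcL (α : 𝕋) : Set 𝕋 := (fun t : ℝ => ((rep α / 2 + t : ℝ) : 𝕋)) '' Set.Ioo 0 (1 / 2)

/-- The open semicircle `{α/2 + 1/2 + t : t ∈ (0,1/2)}`. -/
def openArcR (α : 𝕋) : Set 𝕋 :=
  (fun t : ℝ => ((rep α / 2 + 1 / 2 + t : ℝ) : 𝕋)) '' Set.Ioo 0 (1 / 2)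

/-- The alphabet `{L, R, ⋆}`. -/
inductive Letter | L | R | star
deriving DecidableEq

/-- `itin α x n` is the `(n+1)`-st letter of the itinerary `I^α(x)`. -/
def itin (α x : 𝕋) (n : ℕ) : Letter :=
  if dbl^[n] x = star1 α ∨ dbl^[n] x = star2 α then Letter.star
  else if dbl^[n] x ∈ openArcL α then Letter.L else Letter.R

/-- The lamination `x ≈_α y`. -/
def approx (α : 𝕋) (x y : 𝕋) : Prop :=
  ∀ n : ℕ, itin α x n = itin α y n ∨ itin α x n = Letter.star ∨ itin α y n = Letter.star

/-- A point is periodic under the doubling map. -/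
def IsPeriodicPt' (x : 𝕋) : Prop := ∃ k : ℕ, 1 ≤ k ∧ dbl^[k] x = x

/-- `α` is periodic under the doubling map. -/
def Periodic' (α : 𝕋) : Prop := IsPeriodicPt' α

/-- `α` is pre-periodic under the doubling map. -/
def PrePeriodic (α : 𝕋) : Prop := ∃ m : ℕ, IsPeriodicPt' (dbl^[m] α)

/-- `D` is a gluing link with `n` arcs with respect to `≈_α`: a disjoint union of `n` closed
arcs whose `2n` endpoints occur in counterclockwise cyclic order and are consecutively glued
by `≈_α`. -/
def IsGluingLink (α : 𝕋) (n : ℕ) (D : Set 𝕋) : Prop :=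
  0 < n ∧ ∃ s e : ℕ → ℝ,
    (∀ i < n, s i ≤ e i) ∧
    (∀ i j : ℕ, i < j → j < n → e i < s j) ∧
    (∀ i < n, ∀ j < n, e j < s i + 1) ∧
    D = ⋃ i ∈ Finset.range n, (fun t : ℝ => (t : 𝕋)) '' Set.Icc (s i) (e i) ∧
    (∀ i < n, approx α ((e i : ℝ) : 𝕋) ((s ((i + 1) % n) : ℝ) : 𝕋))

/-- `L̃(x)`: the `h`-preimage of `x` in the interior of `C(L)` (for `x ≠ α`). -/
def tldL (α x : 𝕋) : 𝕋 :=
  if ((rep x / 2 : ℝ) : 𝕋) ∈ openArcL α then ((rep x / 2 : ℝ) : 𝕋)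
  else ((rep x / 2 + 1 / 2 : ℝ) : 𝕋)

/-- `R̃(x)`: the `h`-preimage of `x` in the interior of `C(R)` (for `x ≠ α`). -/
def tldR (α x : 𝕋) : 𝕋 :=
  if ((rep x / 2 : ℝ) : 𝕋) ∈ openArcR α then ((rep x / 2 : ℝ) : 𝕋)
  else ((rep x / 2 + 1 / 2 : ℝ) : 𝕋)

/-- The inverse branch associated with a single letter of `{L,R}`
(`true` codes `L`, `false` codes `R`). -/
def tldB (α : 𝕋) (b : Bool) (x : 𝕋) : 𝕋 := if b then tldL α x else tldR α x

/-- `g̃ = g̃[1] ∘ ⋯ ∘ g̃[n]` for a word `g ∈ {L,R}^*`. -/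
def wtld (α : 𝕋) (g : List Bool) (x : 𝕋) : 𝕋 := g.foldr (fun b y => tldB α b y) x

/-- The embedding `e(θ) = exp(2πiθ)` of the circle into `ℂ`. -/
def emb (x : 𝕋) : ℂ := Complex.exp (2 * Real.pi * Complex.I * (rep x))

/-- The chord of a pair of points of the circle: the closed Euclidean segment joining their
images in `ℂ`. -/
def chord (a b : 𝕋) : Set ℂ := segment ℝ (emb a) (emb b)

/-- The union of all chords `l_g` for words `g ∈ {L,R}^n`. -/
def chordsUnion (α : 𝕋) (n : ℕ) : Set ℂ :=
  ⋃ g ∈ {g : List Bool | g.length = n},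
    chord (wtld α g (star1 α)) (wtld α g (star2 α))

/-- The closed unit disk minus the chords of level `n`. -/
def diskMinus (α : 𝕋) (n : ℕ) : Set ℂ := Metric.closedBall (0 : ℂ) 1 \ chordsUnion α n

/-- `C` is a generalized cylinder set of degree `n`: the trace on the circle of the closure of
a connected component of the closed unit disk minus the chords of level `n`. -/
def IsGCS (α : 𝕋) (n : ℕ) (C : Set 𝕋) : Prop :=
  ∃ z ∈ diskMinus α n,
    C = {x : 𝕋 | emb x ∈ closure (connectedComponentIn (diskMinus α n) z)}

/-- The closed region of the circle associated with a letter (`⋆` imposes no restriction). -/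
def semi (α : 𝕋) : Letter → Set 𝕋
  | Letter.L => arcL α
  | Letter.R => arcR α
  | Letter.star => Set.univ

/-- `C(u)` for a word `u ∈ {L,R,⋆}^m`. -/
def cylSet (α : 𝕋) (u : List Letter) : Set 𝕋 :=
  {x : 𝕋 | ∀ i < u.length, dbl^[i] x ∈ semi α (u.getD i Letter.star)}

/-- The digit sequence of `I(α) = I^α(α)` (0-indexed: `ia α n` is the `(n+1)`-st digit). -/
def ia (α : 𝕋) (n : ℕ) : Letter := itin α α n

/-- A set `ℛ ⊆ ℕ` of indices is `D`-rare. -/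
def DRare (D : ℕ) (R : Finset ℕ) : Prop :=
  ∀ i : ℕ, (R.filter (fun j => i ≤ j ∧ j ≤ i + D)).card ≤ 3

/-- The `i`-th digit (1-based) of `I(α)[1..n]` is `(D,ℛ)`-duplicating. -/
def DupDigit (α : 𝕋) (D : ℕ) (R : Finset ℕ) (n i : ℕ) : Prop :=
  ∃ a b : ℕ, 1 ≤ a ∧ a ≤ i ∧ i ≤ b ∧ b ≤ n ∧
    (∀ j, a ≤ j → j ≤ b → j ∉ R → ia α (j - 1) = ia α (j - a)) ∧
    (b = n ∨ D < b - a + 1)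


/-- `α` is strongly recurrent. -/
def StronglyRecurrent (α : 𝕋) : Prop :=
  ∀ D : ℕ, 0 < D → ∀ τ : ℝ, τ < 1 →
    ∃ n : ℕ, D < n ∧ ∃ R : Finset ℕ, R ⊆ Finset.Icc 1 n ∧ DRare D R ∧
      τ * n < ((Finset.Icc 1 n).filter (fun i => DupDigit α D R n i)).card

/-- `α` is weakly pre-periodic with period `k`. -/
def WeaklyPrePeriodicWith (α : 𝕋) (k : ℕ) : Prop :=
  1 ≤ k ∧ ∃ m : ℕ, 1 ≤ m ∧ ∃ X : Letter, (X = Letter.L ∨ X = Letter.R) ∧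
    ∀ n : ℕ, ia α (m + k * n - 1) = X

/-- `α` is weakly pre-periodic (for some period). -/
def WeaklyPrePeriodic (α : 𝕋) : Prop := ∃ k : ℕ, WeaklyPrePeriodicWith α k

end
open Real
noncomputable section

def EE (θ : ℝ) : ℂ := Complex.exp (2 * Real.pi * Complex.I * θ)

lemma EE_mul (x y : ℝ) : EE x * EE y = EE (x + y) := by
  rw [EE, EE, EE, ← Complex.exp_add]; congr 1; push_cast; ring

lemma EE_conj (x : ℝ) : (starRingEnd ℂ) (EE x) = EE (-x) := by
  rw [EE, ← Complex.exp_conj]; congr 1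
  simp only [map_mul, Complex.conj_I, Complex.conj_ofReal, map_ofNat]
  push_cast; ring

lemma EE_key (x : ℝ) : (2*(π:ℂ)*Complex.I*(x:ℂ)) = ((2*π*x : ℝ) : ℂ) * Complex.I := by
  push_cast; ring

lemma EE_im (x : ℝ) : (EE x).im = Real.sin (2*π*x) := by
  rw [EE, EE_key, Complex.exp_ofReal_mul_I_im]

lemma EE_re (x : ℝ) : (EE x).re = Real.cos (2*π*x) := by
  rw [EE, EE_key, Complex.exp_ofReal_mul_I_re]

lemma EE_zero : EE 0 = 1 := by simp [EE]

lemma EE_int (x : ℝ) (k : ℤ) : EE (x + k) = EE x := by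
  rw [← EE_mul]
  rw [show EE (k:ℝ) = 1 by
    rw [EE, show (2*(π:ℂ)*Complex.I*((k:ℝ):ℂ)) = (k:ℤ) * (2*↑π*Complex.I) by push_cast; ring,
      Complex.exp_int_mul_two_pi_mul_I], mul_one]

lemma EE_abs (x : ℝ) : ‖(EE x)‖ = 1 := by
  rw [EE, EE_key]; exact Complex.norm_exp_ofReal_mul_I _

def sfn (A B w : ℂ) : ℝ := ((starRingEnd ℂ) (B - A) * (w - A)).im

lemma sfn_trig_core (A B : ℝ) :
    sin (2*B) - sin (2*B - 2*A) - sin (2*A) = 4 * sin (A - B) * sin A * sin B := by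
  rw [sin_two_mul, sin_two_mul, show (2*B - 2*A) = (2*B) + (-(2*A)) by ring, sin_add,
    sin_two_mul, cos_two_mul, sin_neg, cos_neg, sin_two_mul, cos_two_mul, sin_sub]
  linear_combination (-4*Real.sin B*Real.cos B) * Real.sin_sq_add_cos_sq A
    + (4*Real.sin A*Real.cos A) * Real.sin_sq_add_cos_sq B

lemma sfn_EE (a b t : ℝ) :
    sfn (EE a) (EE b) (EE t) = 4 * sin (π*(b-a)) * sin (π*(t-a)) * sin (π*(t-b)) := by
  have expand : (starRingEnd ℂ) (EE b - EE a) * (EE t - EE a)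
      = EE (t-b) - EE (a-b) - EE (t-a) + EE 0 := by
    rw [map_sub, EE_conj, EE_conj]
    have h1 : EE (-b) * EE t = EE (t - b) := by rw [EE_mul]; ring_nf
    have h2 : EE (-b) * EE a = EE (a - b) := by rw [EE_mul]; ring_nf
    have h3 : EE (-a) * EE t = EE (t - a) := by rw [EE_mul]; ring_nf
    have h4 : EE (-a) * EE a = EE 0 := by rw [EE_mul]; ring_nf
    rw [sub_mul, mul_sub, mul_sub, h1, h2, h3, h4]; ring
  rw [sfn, expand]
  simp only [Complex.add_im, Complex.sub_im, EE_im, EE_zero, Complex.one_im]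
  have := sfn_trig_core (π*(t-a)) (π*(t-b))
  rw [show 2*(π*(t-a)) = 2*π*(t-a) by ring, show 2*(π*(t-b)) = 2*π*(t-b) by ring,
    show 2*π*(t-b) - 2*π*(t-a) = 2*π*(a-b) by ring,
    show π*(t-a) - π*(t-b) = π*(b-a) by ring] at this
  linarith [this]
open Real
noncomputable section

lemma sinpi_pos {x : ℝ} (h0 : 0 < x) (h1 : x < 1) : 0 < sin (π*x) :=
  sin_pos_of_pos_of_lt_pi (by positivity) (by nlinarith [pi_pos])

lemma sinpi_neg {x : ℝ} (h0 : -1 < x) (h1 : x < 0) : sin (π*x) < 0 := by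
  have := sinpi_pos (x := -x) (by linarith) (by linarith)
  rw [show π * (-x) = -(π*x) by ring, sin_neg] at this; linarith

lemma cospi_pos {x : ℝ} (h0 : -(1/2) < x) (h1 : x < 1/2) : 0 < cos (π*x) := by
  apply cos_pos_of_mem_Ioo; constructor <;> [nlinarith [pi_pos]; nlinarith [pi_pos]]

lemma cospi_neg {x : ℝ} (h0 : 1/2 < x) (h1 : x < 3/2) : cos (π*x) < 0 := by
  apply cos_neg_of_pi_div_two_lt_of_lt <;> nlinarith [pi_pos]

lemma sin_shift_pair (x y : ℝ) (k : ℤ) :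
    sin (π*(x+k)) * sin (π*(y+k)) = sin (π*x) * sin (π*y) := by
  rw [show π*(x+k) = π*x + k*π by ring, show π*(y+k) = π*y + k*π by ring,
    sin_add_int_mul_pi, sin_add_int_mul_pi]
  have hpow : ((-1:ℝ))^k * ((-1:ℝ))^k = 1 := by
    rw [← zpow_add₀ (by norm_num : (-1:ℝ) ≠ 0)]; exact Even.neg_one_zpow ⟨k, rfl⟩
  calc ((-1:ℝ))^k * sin (π*x) * (((-1:ℝ))^k * sin (π*y))
      = (((-1:ℝ))^k * ((-1:ℝ))^k) * (sin (π*x) * sin (π*y)) := by ring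
    _ = sin (π*x) * sin (π*y) := by rw [hpow]; ring

lemma cos_shift_pair (x y : ℝ) (k : ℤ) :
    cos (π*(x+k)) * cos (π*(y+k)) = cos (π*x) * cos (π*y) := by
  rw [show π*(x+k) = π*x + k*π by ring, show π*(y+k) = π*y + k*π by ring,
    cos_add_int_mul_pi, cos_add_int_mul_pi]
  have hpow : ((-1:ℝ))^k * ((-1:ℝ))^k = 1 := by
    rw [← zpow_add₀ (by norm_num : (-1:ℝ) ≠ 0)]; exact Even.neg_one_zpow ⟨k, rfl⟩
  calc ((-1:ℝ))^k * cos (π*x) * (((-1:ℝ))^k * cos (π*y))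
      = (((-1:ℝ))^k * ((-1:ℝ))^k) * (cos (π*x) * cos (π*y)) := by ring
    _ = cos (π*x) * cos (π*y) := by rw [hpow]; ring

section caps
variable {a b v : ℝ} (ha : 0 < a) (hab : a ≤ b) (hb : b < 1/2) (hv0 : 0 ≤ v) (hv1 : v < 1)

include ha hab hb hv0 hv1 in
lemma capL (hS : sin (π*(v-a)) * sin (π*(v-b)) ≤ 0) : a ≤ v ∧ v ≤ b := by
  by_contra hcon
  push_neg at hcon
  rcases lt_or_ge v a with h | h
  · have h1 : sin (π*(v-a)) < 0 := sinpi_neg (by linarith) (by linarith)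
    have h2 : sin (π*(v-b)) < 0 := sinpi_neg (by linarith) (by linarith)
    nlinarith
  · have h' := hcon h
    have h1 : 0 < sin (π*(v-a)) := sinpi_pos (by linarith) (by linarith)
    have h2 : 0 < sin (π*(v-b)) := sinpi_pos (by linarith) (by linarith)
    nlinarith

include ha hab hb hv0 hv1 in
lemma capR (hC : cos (π*(v-a)) * cos (π*(v-b)) ≤ 0) : a + 1/2 ≤ v ∧ v ≤ b + 1/2 := by
  by_contra hcon
  push_neg at hcon
  rcases lt_or_ge v (a + 1/2) with h | h
  · have h1 : 0 < cos (π*(v-a)) := cospi_pos (by linarith) (by linarith)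
    have h2 : 0 < cos (π*(v-b)) := cospi_pos (by linarith) (by linarith)
    nlinarith
  · have h' := hcon h
    have h1 : cos (π*(v-a)) < 0 := cospi_neg (by linarith) (by linarith)
    have h2 : cos (π*(v-b)) < 0 := cospi_neg (by linarith) (by linarith)
    nlinarith

include ha hab hb hv0 hv1 in
lemma starstar (hS : sin (π*(v-a)) * sin (π*(v-b)) ≤ 0) :
    0 < cos (π*(v-a)) * cos (π*(v-b)) := by
  obtain ⟨h1, h2⟩ := capL ha hab hb hv0 hv1 hS
  have c1 : 0 < cos (π*(v-a)) := cospi_pos (by linarith) (by linarith)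
  have c2 : 0 < cos (π*(v-b)) := cospi_pos (by linarith) (by linarith)
  positivity

include ha hab hb in
lemma semiL {u : ℝ} (h1 : a ≤ u) (h2 : u ≤ b) : 0 < sin (2*π*u) := by
  rw [show 2*π*u = π*(2*u) by ring]; exact sinpi_pos (by linarith) (by linarith)

include ha hab hb in
lemma semiR {u : ℝ} (h1 : a + 1/2 ≤ u) (h2 : u ≤ b + 1/2) : sin (2*π*u) < 0 := by
  have : 0 < sin (π*(2*u - 1)) := sinpi_pos (by linarith) (by linarith)
  rw [show π*(2*u-1) = 2*π*u - π by ring, sin_sub_pi] at this; linarith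

end caps

lemma KPC {st ct sx cx : ℝ} (hsx : sx ≠ 0) (hcx : cx ≠ 0)
    (hxstar : ¬(sx ≤ 0 ∧ cx ≤ 0)) (htstar : ¬(st ≤ 0 ∧ ct ≤ 0))
    (H : 0 ≤ st*ct*sx*cx)
    (fail : ¬(0 ≤ st*sx ∧ 0 ≤ ct*cx)) :
    (sx < 0 ∧ ct ≤ 0) ∨ (cx < 0 ∧ st ≤ 0) := by
  push_neg at fail hxstar htstar
  rcases lt_or_ge (st*sx) 0 with h | h
  · rcases hsx.lt_or_gt with hs | hs
    · left; refine ⟨hs, ?_⟩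
      by_contra hct; push_neg at hct
      have hst : 0 < st := by nlinarith
      have hprod : 0 ≤ (st*ct) * (sx*cx) := by nlinarith
      have hstct : 0 < st*ct := mul_pos hst hct
      have hsxcx : 0 ≤ sx*cx := nonneg_of_mul_nonneg_left (by nlinarith) hstct
      have hcx' : cx ≤ 0 := by nlinarith
      exact absurd (hxstar (le_of_lt hs)) (not_lt.mpr hcx')
    · have hst : st < 0 := by nlinarith
      have hct : 0 < ct := by
        by_contra hh; push_neg at hh; linarith [htstar (le_of_lt hst)]
      right; refine ⟨?_, le_of_lt hst⟩
      by_contra hcx2; push_neg at hcx2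
      have hcx3 : 0 < cx := lt_of_le_of_ne hcx2 (Ne.symm hcx)
      have : st*ct*sx*cx < 0 :=
        mul_neg_of_neg_of_pos
          (mul_neg_of_neg_of_pos (mul_neg_of_neg_of_pos hst hct) hs) hcx3
      linarith
  · have h2 := fail h
    rcases hcx.lt_or_gt with hc | hc
    · have hct : 0 < ct := by nlinarith
      right; refine ⟨hc, ?_⟩
      by_contra hst; push_neg at hst
      have hsx' : sx ≤ 0 := by
        by_contra hsx2; push_neg at hsx2
        have : st*ct*sx*cx < 0 :=
          mul_neg_of_pos_of_neg (mul_pos (mul_pos hst hct) hsx2) hc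
        linarith
      exact absurd (hxstar hsx') (not_lt.mpr (le_of_lt hc))
    · have hct : ct < 0 := by nlinarith
      have hst : 0 < st := by
        by_contra hh; push_neg at hh; linarith [htstar hh]
      left; refine ⟨?_, le_of_lt hct⟩
      by_contra hsx2; push_neg at hsx2
      have hsx3 : 0 < sx := lt_of_le_of_ne hsx2 (Ne.symm hsx)
      have : st*ct*sx*cx < 0 :=
        mul_neg_of_neg_of_pos
          (mul_neg_of_neg_of_pos (mul_neg_of_pos_of_neg hst hct) hsx3) hc
      linarith
noncomputable section
open Real

-- ## AddCircle plumbing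

lemma rep_mem (u : 𝕋) : rep u ∈ Set.Ico (0:ℝ) 1 := by
  have := (AddCircle.equivIco 1 0 u).2; simpa [rep] using this

lemma coe_rep (u : 𝕋) : ((rep u : ℝ) : 𝕋) = u := (AddCircle.equivIco 1 0).symm_apply_apply u

lemma rep_coe (r : ℝ) : rep ((r : ℝ) : 𝕋) = Int.fract r := by
  have := AddCircle.coe_equivIco_mk_apply (1:ℝ) r
  simpa [rep] using this

lemma rep_coe_of_mem {r : ℝ} (h0 : 0 ≤ r) (h1 : r < 1) : rep ((r : ℝ) : 𝕋) = r := by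
  rw [rep_coe]; exact Int.fract_eq_self.mpr ⟨h0, h1⟩

lemma coe_add' (r s : ℝ) : ((r + s : ℝ) : 𝕋) = ((r:ℝ):𝕋) + ((s:ℝ):𝕋) := rfl

lemma coe_eq_coe {r s : ℝ} (h : ((r:ℝ) : 𝕋) = ((s:ℝ) : 𝕋)) : ∃ k : ℤ, r - s = k := by
  have h2 : ((r - s : ℝ) : 𝕋) = 0 := by
    have : ((r - s : ℝ) : 𝕋) = ((r:ℝ):𝕋) - ((s:ℝ):𝕋) := rfl
    rw [this, h, sub_self]
  obtain ⟨n, hn⟩ := (AddCircle.coe_eq_zero_iff (1:ℝ)).mp h2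
  exact ⟨n, by simpa using hn.symm⟩

lemma coe_int_add (r : ℝ) (k : ℤ) : ((r + k : ℝ) : 𝕋) = ((r : ℝ) : 𝕋) := by
  have h : (((k:ℝ) : ℝ) : 𝕋) = 0 := by
    rw [AddCircle.coe_eq_zero_iff]; exact ⟨k, by simp⟩
  rw [coe_add', h, add_zero]

lemma dbl_coe (r : ℝ) : dbl ((r : ℝ) : 𝕋) = ((2*r : ℝ) : 𝕋) := by
  rw [dbl, show (2*r) = r + r by ring, coe_add']

lemma dbl_eq (u : 𝕋) : dbl u = ((2 * rep u : ℝ) : 𝕋) := by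
  conv_lhs => rw [← coe_rep u]
  exact dbl_coe _

-- ## emb basics

lemma emb_eq (u : 𝕋) : emb u = EE (rep u) := rfl

lemma emb_coe (r : ℝ) : emb ((r : ℝ) : 𝕋) = EE r := by
  rw [emb_eq, rep_coe, Int.fract]
  rw [show r - ↑⌊r⌋ = r + (-⌊r⌋ : ℤ) by push_cast; ring, EE_int]

lemma emb_abs (u : 𝕋) : ‖(emb u)‖ = 1 := by rw [emb_eq]; exact EE_abs _

lemma two_pi_I_ne : (2*(π:ℂ)*Complex.I) ≠ 0 := by
  refine mul_ne_zero (mul_ne_zero ?_ ?_) Complex.I_ne_zero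
  · norm_num
  · exact_mod_cast Real.pi_ne_zero

lemma emb_inj {u v : 𝕋} (h : emb u = emb v) : u = v := by
  rw [emb_eq, emb_eq] at h
  have h2 : EE (rep v) ≠ 0 := by
    intro hz; have := EE_abs (rep v); rw [hz] at this; simpa using this
  have h3 : EE (rep u - rep v) = 1 := by
    have h1 : EE (rep u - rep v) * EE (rep v) = 1 * EE (rep v) := by
      rw [EE_mul, sub_add_cancel, h, one_mul]
    exact mul_right_cancel₀ h2 h1
  rw [EE] at h3
  obtain ⟨k, hk⟩ := Complex.exp_eq_one_iff.mp h3
  have hdk : (2*(π:ℂ)*Complex.I) * ((rep u - rep v : ℝ):ℂ)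
      = (2*(π:ℂ)*Complex.I) * (k:ℂ) := by linear_combination hk
  have hr : ((rep u - rep v : ℝ):ℂ) = (k:ℂ) := mul_left_cancel₀ two_pi_I_ne hdk
  have hr2 : rep u - rep v = (k : ℝ) := by exact_mod_cast hr
  have hu := rep_mem u; have hv := rep_mem v
  simp only [Set.mem_Ico] at hu hv
  have hk0 : k = 0 := by
    have h5 : (-1:ℝ) < (k:ℝ) := by linarith
    have h6 : (k:ℝ) < 1 := by linarith
    have h5' : (-1:ℤ) < k := by exact_mod_cast h5
    have h6' : k < 1 := by exact_mod_cast h6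
    omega
  have : rep u = rep v := by rw [hk0] at hr2; push_cast at hr2; linarith
  rw [← coe_rep u, ← coe_rep v, this]

lemma emb_dbl (u : 𝕋) : emb (dbl u) = EE (2 * rep u) := by
  rw [dbl_eq, emb_coe]

-- ## dynamics

lemma dbl_tldL (α u : 𝕋) : dbl (tldL α u) = u := by
  rw [tldL]; split_ifs
  · rw [dbl_coe, show 2*(rep u/2) = rep u by ring, coe_rep]
  · rw [dbl_coe, show 2*(rep u/2 + 1/2) = rep u + (1:ℤ) by push_cast; ring,
      coe_int_add, coe_rep]

lemma dbl_tldR (α u : 𝕋) : dbl (tldR α u) = u := by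
  rw [tldR]; split_ifs
  · rw [dbl_coe, show 2*(rep u/2) = rep u by ring, coe_rep]
  · rw [dbl_coe, show 2*(rep u/2 + 1/2) = rep u + (1:ℤ) by push_cast; ring,
      coe_int_add, coe_rep]

lemma dbl_tldB (α : 𝕋) (b : Bool) (u : 𝕋) : dbl (tldB α b u) = u := by
  cases b <;> simp [tldB, dbl_tldL, dbl_tldR]

lemma wtld_cons (α : 𝕋) (b : Bool) (g : List Bool) (u : 𝕋) :
    wtld α (b :: g) u = tldB α b (wtld α g u) := rfl

lemma dbl_iter_wtld (α : 𝕋) (g : List Bool) (u : 𝕋) :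
    dbl^[g.length] (wtld α g u) = u := by
  induction g with
  | nil => rfl
  | cons b g ih =>
    rw [wtld_cons, List.length_cons, Function.iterate_succ_apply, dbl_tldB, ih]

lemma dbl_star1 (α : 𝕋) : dbl (star1 α) = α := by
  rw [star1, dbl_coe, show 2*(rep α/2) = rep α by ring, coe_rep]

lemma dbl_star2 (α : 𝕋) : dbl (star2 α) = α := by
  rw [star2, dbl_coe, show 2*(rep α/2 + 1/2) = rep α + (1:ℤ) by push_cast; ring,
    coe_int_add, coe_rep]

lemma star_ne (α : 𝕋) : star1 α ≠ star2 α := by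
  intro h
  obtain ⟨k, hk⟩ := coe_eq_coe (h : ((rep α/2 : ℝ):𝕋) = ((rep α/2 + 1/2 : ℝ):𝕋))
  have : (k:ℝ) = -(1/2) := by linarith
  have h2 : ((2*k : ℤ):ℝ) = -1 := by push_cast; linarith
  have h3 : (2*k : ℤ) = -1 := by exact_mod_cast h2
  omega

lemma wtld_star_ne_alpha {α : 𝕋} (hα : ¬ Periodic' α) {s : 𝕋} (hs : dbl s = α)
    (g : List Bool) : wtld α g s ≠ α := by
  intro h
  apply hα
  refine ⟨g.length + 1, Nat.succ_le_succ (Nat.zero_le _), ?_⟩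
  have h1 : dbl^[g.length] α = s := by
    conv_lhs => rw [← h]
    exact dbl_iter_wtld α g s
  rw [Function.iterate_succ_apply', h1, hs]

-- ## the inverse branches land in open semicircles, key structure lemma

lemma tld_both {α u : 𝕋} (hu : u ≠ α) :
    ∃ τ : ℝ, 0 < τ ∧ τ < 1/2 ∧ rep (tldL α u) = rep α/2 + τ ∧
      tldR α u = ((rep (tldL α u) + 1/2 : ℝ) : 𝕋) := by
  have hcm := rep_mem α
  have hsm := rep_mem u
  simp only [Set.mem_Ico] at hcm hsm
  set c := rep α / 2 with hc
  set s := rep u / 2 with hs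
  have hc0 : 0 ≤ c := by rw [hc]; linarith
  have hc1 : c < 1/2 := by rw [hc]; linarith
  have hs0 : 0 ≤ s := by rw [hs]; linarith
  have hs1 : s < 1/2 := by rw [hs]; linarith
  have hsc : s ≠ c := by
    intro h
    apply hu
    have : rep u = rep α := by rw [hs, hc] at h; linarith
    rw [← coe_rep u, this, coe_rep]
  rcases hsc.lt_or_gt with hlt | hgt
  · -- s < c : tldL u = coe (s + 1/2), tldR u = coe s
    have hnL : ((s : ℝ) : 𝕋) ∉ openArcL α := by
      rintro ⟨t, ⟨ht0, ht1⟩, hteq⟩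
      obtain ⟨k, hk⟩ := coe_eq_coe hteq
      have k0 : (0:ℝ) < k := by linarith
      have k1 : (k:ℝ) < 1 := by linarith
      have k0' : (0:ℤ) < k := by exact_mod_cast k0
      have k1' : k < 1 := by exact_mod_cast k1
      omega
    have hR : ((s : ℝ) : 𝕋) ∈ openArcR α := by
      refine ⟨s - c + 1/2, ⟨by linarith, by linarith⟩, ?_⟩
      show ((c + 1/2 + (s - c + 1/2) : ℝ) : 𝕋) = _
      rw [show c + 1/2 + (s - c + 1/2) = s + (1:ℤ) by push_cast; ring, coe_int_add]
    have hLval : tldL α u = ((s + 1/2 : ℝ) : 𝕋) := by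
      rw [tldL, if_neg]; exact hnL
    have hRval : tldR α u = ((s : ℝ) : 𝕋) := by
      rw [tldR, if_pos]; exact hR
    have hrepL : rep (tldL α u) = s + 1/2 := by
      rw [hLval, rep_coe_of_mem (by linarith) (by linarith)]
    refine ⟨s + 1/2 - c, by linarith, by linarith, by rw [hrepL]; ring, ?_⟩
    rw [hRval, hrepL, show s + 1/2 + 1/2 = s + (1:ℤ) by push_cast; ring, coe_int_add]
  · -- c < s : tldL u = coe s, tldR u = coe (s + 1/2)
    have hL : ((s : ℝ) : 𝕋) ∈ openArcL α := by
      refine ⟨s - c, ⟨by linarith, by linarith⟩, ?_⟩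
      show ((c + (s - c) : ℝ) : 𝕋) = _
      rw [show c + (s - c) = s by ring]
    have hnR : ((s : ℝ) : 𝕋) ∉ openArcR α := by
      rintro ⟨t, ⟨ht0, ht1⟩, hteq⟩
      obtain ⟨k, hk⟩ := coe_eq_coe hteq
      have k0 : (0:ℝ) < k := by linarith
      have k1 : (k:ℝ) < 1 := by linarith
      have k0' : (0:ℤ) < k := by exact_mod_cast k0
      have k1' : k < 1 := by exact_mod_cast k1
      omega
    have hLval : tldL α u = ((s : ℝ) : 𝕋) := by
      rw [tldL, if_pos]; exact hL
    have hRval : tldR α u = ((s + 1/2 : ℝ) : 𝕋) := by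
      rw [tldR, if_neg]; exact hnR
    have hrepL : rep (tldL α u) = s := by
      rw [hLval, rep_coe_of_mem (by linarith) (by linarith)]
    exact ⟨s - c, by linarith, by linarith, by rw [hrepL]; ring, by rw [hRval, hrepL]⟩

end
noncomputable section
open Real

-- ## planar geometry of chords

lemma sfn_im_formula (A B w : ℂ) :
    sfn A B w = (B-A).re*(w-A).im - (B-A).im*(w-A).re := by
  simp [sfn, Complex.mul_im, Complex.conj_re, Complex.conj_im]; ring

lemma continuous_sfn (A B : ℂ) : Continuous (fun w => sfn A B w) := by
  simp only [sfn_im_formula]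
  fun_prop

lemma sfn_chord_zero (A B : ℂ) {w : ℂ} (hw : w ∈ segment ℝ A B) : sfn A B w = 0 := by
  rw [segment_eq_image] at hw
  obtain ⟨t, _, rfl⟩ := hw
  simp only [sfn_im_formula, Complex.add_re, Complex.add_im, Complex.sub_re,
    Complex.sub_im, Complex.smul_re, Complex.smul_im, smul_eq_mul]
  ring

lemma normSq_one_of_abs {A : ℂ} (h : ‖A‖ = 1) : A.re^2 + A.im^2 = 1 := by
  have h1 := Complex.normSq_eq_norm_sq A
  rw [h] at h1
  simp [Complex.normSq_apply] at h1
  nlinarith [h1]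

lemma ne_zero_re_im {A B : ℂ} (hAB : A ≠ B) :
    0 < (B.re-A.re)^2 + (B.im-A.im)^2 := by
  have hD : B - A ≠ 0 := sub_ne_zero.mpr (Ne.symm hAB)
  have h2 : (B-A).re ≠ 0 ∨ (B-A).im ≠ 0 := by
    by_contra hcon; push_neg at hcon
    exact hD (Complex.ext hcon.1 hcon.2)
  simp only [Complex.sub_re, Complex.sub_im] at h2
  rcases h2 with h|h
  · have : 0 < (B.re-A.re)^2 := by positivity
    nlinarith [sq_nonneg (B.im-A.im)]
  · have : 0 < (B.im-A.im)^2 := by positivity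
    nlinarith [sq_nonneg (B.re-A.re)]

set_option maxHeartbeats 1000000 in
lemma sfn_zero_mem_segment {A B w : ℂ} (hA : ‖A‖ = 1) (hB : ‖B‖ = 1)
    (hAB : A ≠ B) (hw : ‖w‖ ≤ 1) (hf : sfn A B w = 0) : w ∈ segment ℝ A B := by
  have hA2 := normSq_one_of_abs hA
  have hB2 := normSq_one_of_abs hB
  have hw2 : w.re^2 + w.im^2 ≤ 1 := by
    have h1 := Complex.normSq_eq_norm_sq w
    have h2 : Complex.normSq w ≤ 1 := by
      rw [h1]; nlinarith [norm_nonneg w]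
    simpa [Complex.normSq_apply, sq] using h2
  have hN : 0 < (B.re-A.re)^2 + (B.im-A.im)^2 := ne_zero_re_im hAB
  rw [sfn_im_formula] at hf
  simp only [Complex.sub_re, Complex.sub_im] at hf
  have h1 : ((B.re-A.re)^2+(B.im-A.im)^2) * (w.re - A.re)
      = ((B.re-A.re)*(w.re-A.re) + (B.im-A.im)*(w.im-A.im)) * (B.re-A.re) := by
    linear_combination (-(B.im-A.im))*hf
  have h2 : ((B.re-A.re)^2+(B.im-A.im)^2) * (w.im - A.im)
      = ((B.re-A.re)*(w.re-A.re) + (B.im-A.im)*(w.im-A.im)) * (B.im-A.im) := by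
    linear_combination (B.re-A.re)*hf
  obtain ⟨t, ht⟩ : ∃ t : ℝ, t = ((B.re-A.re)*(w.re-A.re) + (B.im-A.im)*(w.im-A.im))
      / ((B.re-A.re)^2+(B.im-A.im)^2) := ⟨_, rfl⟩
  have hwre : w.re = A.re + t*(B.re-A.re) := by
    have : t*(B.re-A.re) = w.re - A.re := by
      rw [ht, div_mul_eq_mul_div, ← h1, mul_div_assoc, mul_comm,
        div_mul_cancel₀ _ (ne_of_gt hN)]
    linarith
  have hwim : w.im = A.im + t*(B.im-A.im) := by
    have : t*(B.im-A.im) = w.im - A.im := by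
      rw [ht, div_mul_eq_mul_div, ← h2, mul_div_assoc, mul_comm,
        div_mul_cancel₀ _ (ne_of_gt hN)]
    linarith
  have hdot : A.re*(B.re-A.re) + A.im*(B.im-A.im)
      = -((B.re-A.re)^2+(B.im-A.im)^2)/2 := by
    linear_combination (1/2)*hB2 - (1/2)*hA2
  have hw3 : (A.re + t*(B.re-A.re))^2 + (A.im + t*(B.im-A.im))^2 ≤ 1 := by
    rw [← hwre, ← hwim]; exact hw2
  have hdot2 : 2*t*(A.re*(B.re-A.re) + A.im*(B.im-A.im))
      = -(t*((B.re-A.re)^2+(B.im-A.im)^2)) := by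
    rw [hdot]; ring
  have hkey : ((B.re-A.re)^2+(B.im-A.im)^2) * (t*(t-1)) ≤ 0 := by
    nlinarith [hw3, hA2, hdot2]
  have ht0 : 0 ≤ t := by
    by_contra h7; push_neg at h7
    nlinarith [mul_pos hN (mul_pos_of_neg_of_neg h7 (show t - 1 < 0 by linarith))]
  have ht1 : t ≤ 1 := by
    by_contra h7; push_neg at h7
    nlinarith [mul_pos hN (mul_pos (show (0:ℝ) < t by linarith) (show 0 < t - 1 by linarith))]
  rw [segment_eq_image]
  refine ⟨t, ⟨ht0, ht1⟩, ?_⟩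
  apply Complex.ext
  · simp only [Complex.add_re, Complex.smul_re, smul_eq_mul]
    rw [hwre]; ring
  · simp only [Complex.add_im, Complex.smul_im, smul_eq_mul]
    rw [hwim]; ring

set_option maxHeartbeats 1000000 in
lemma segment_abs_one {A B w : ℂ} (hA : ‖A‖ = 1) (hB : ‖B‖ = 1)
    (hAB : A ≠ B) (hw : w ∈ segment ℝ A B) (habs : ‖w‖ = 1) :
    w = A ∨ w = B := by
  have hA2 := normSq_one_of_abs hA
  have hB2 := normSq_one_of_abs hB
  rw [segment_eq_image] at hw
  obtain ⟨t, ⟨ht0, ht1⟩, rfl⟩ := hw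
  have hw2 := normSq_one_of_abs habs
  simp only [Complex.add_re, Complex.add_im, Complex.smul_re, Complex.smul_im,
    smul_eq_mul] at hw2
  have hN := ne_zero_re_im hAB
  have hfact : t*(1-t) * ((B.re-A.re)^2 + (B.im-A.im)^2) = 0 := by
    linear_combination (-1)*hw2 + ((1-t)^2 + t*(1-t))*hA2 + (t^2 + t*(1-t))*hB2
  have ht01 : t = 0 ∨ t = 1 := by
    rcases mul_eq_zero.mp hfact with h | h
    · rcases mul_eq_zero.mp h with h | h
      · left; exact h
      · right; linarith
    · exact absurd h (ne_of_gt hN)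
  rcases ht01 with rfl | rfl
  · left; simp
  · right; simp
noncomputable section
open Real

def chA (α : 𝕋) (g : List Bool) : ℂ := emb (wtld α g (star1 α))
def chB (α : 𝕋) (g : List Bool) : ℂ := emb (wtld α g (star2 α))

lemma wtld_ne (α : 𝕋) (g : List Bool) : wtld α g (star1 α) ≠ wtld α g (star2 α) := by
  intro h
  have h2 := congrArg (dbl^[g.length]) h
  rw [dbl_iter_wtld, dbl_iter_wtld] at h2
  exact star_ne α h2

lemma chAB_ne (α : 𝕋) (g : List Bool) : chA α g ≠ chB α g :=
  fun h => wtld_ne α g (emb_inj h)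

lemma mem_ball_iff_abs (w : ℂ) :
    w ∈ Metric.closedBall (0:ℂ) 1 ↔ ‖w‖ ≤ 1 := by
  rw [Metric.mem_closedBall, Complex.dist_eq, sub_zero]

lemma chord_eq_segment (α : 𝕋) (g : List Bool) :
    chord (wtld α g (star1 α)) (wtld α g (star2 α)) = segment ℝ (chA α g) (chB α g) := rfl

lemma sfn_ne_of_diskMinus {α : 𝕋} {n : ℕ} {w : ℂ} (hw : w ∈ diskMinus α n)
    {g : List Bool} (hg : g.length = n) : sfn (chA α g) (chB α g) w ≠ 0 := by
  intro h0
  have hseg := sfn_zero_mem_segment (emb_abs _) (emb_abs _) (chAB_ne α g)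
    ((mem_ball_iff_abs w).mp hw.1) h0
  apply hw.2
  rw [chordsUnion]
  exact Set.mem_biUnion (show g ∈ {g : List Bool | g.length = n} from hg)
    (by rw [chord_eq_segment]; exact hseg)

lemma sfn_affine (A B z w : ℂ) (a b : ℝ) (hab : a + b = 1) :
    sfn A B (a•z + b•w) = a * sfn A B z + b * sfn A B w := by
  simp only [sfn_im_formula, Complex.add_re, Complex.add_im, Complex.smul_re,
    Complex.smul_im, Complex.sub_re, Complex.sub_im, smul_eq_mul]
  have h1 : b = 1 - a := by linarith
  rw [h1]; ring

lemma closure_component {α : 𝕋} {n : ℕ} {z : ℂ} (hz : z ∈ diskMinus α n) :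
    closure (connectedComponentIn (diskMinus α n) z)
      = Metric.closedBall (0:ℂ) 1 ∩
        {w | ∀ g : List Bool, g.length = n →
          0 ≤ sfn (chA α g) (chB α g) w * sfn (chA α g) (chB α g) z} := by
  have hzb : z ∈ Metric.closedBall (0:ℂ) 1 := hz.1
  have hfz : ∀ g : List Bool, g.length = n → sfn (chA α g) (chB α g) z ≠ 0 :=
    fun g hg => sfn_ne_of_diskMinus hz hg
  set E := Metric.closedBall (0:ℂ) 1 ∩
    {w | ∀ g : List Bool, g.length = n →
      0 < sfn (chA α g) (chB α g) w * sfn (chA α g) (chB α g) z} with hE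
  have hzE : z ∈ E := ⟨hzb, fun g hg => mul_self_pos.mpr (hfz g hg)⟩
  have hEsub : E ⊆ diskMinus α n := by
    rintro w ⟨hwb, hwf⟩
    refine ⟨hwb, fun hch => ?_⟩
    rw [chordsUnion] at hch
    simp only [Set.mem_iUnion] at hch
    obtain ⟨g, hg, hseg⟩ := hch
    rw [chord_eq_segment] at hseg
    have h0 := sfn_chord_zero (chA α g) (chB α g) hseg
    have h1 := hwf g hg
    rw [h0, zero_mul] at h1
    exact lt_irrefl _ h1
  have hconv : Convex ℝ E := by
    rintro w1 ⟨h1b, h1f⟩ w2 ⟨h2b, h2f⟩ a b ha hb hab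
    refine ⟨convex_closedBall (0:ℂ) 1 h1b h2b ha hb hab, fun g hg => ?_⟩
    rw [sfn_affine _ _ _ _ a b hab]
    have e1 := h1f g hg
    have e2 := h2f g hg
    have hab' : 0 < a ∨ 0 < b := by
      by_contra hcon; push_neg at hcon
      linarith [hcon.1, hcon.2]
    rcases hab' with h | h
    · nlinarith [mul_nonneg hb e2.le]
    · nlinarith [mul_nonneg ha e1.le]
  have hcomp : connectedComponentIn (diskMinus α n) z = E := by
    apply subset_antisymm
    · intro w hw
      refine ⟨(connectedComponentIn_subset _ _ hw).1, fun g hg => ?_⟩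
      set f := fun v => sfn (chA α g) (chB α g) v with hf
      have hu : IsOpen {v : ℂ | 0 < f v * f z} :=
        isOpen_lt continuous_const ((continuous_sfn _ _).mul continuous_const)
      have hv : IsOpen {v : ℂ | f v * f z < 0} :=
        isOpen_lt ((continuous_sfn _ _).mul continuous_const) continuous_const
      have hdisj : Disjoint {v : ℂ | 0 < f v * f z} {v : ℂ | f v * f z < 0} := by
        rw [Set.disjoint_left]
        intro v h1 h2
        simp only [Set.mem_setOf_eq] at h1 h2
        linarith
      have hsub : connectedComponentIn (diskMinus α n) z
          ⊆ {v : ℂ | 0 < f v * f z} ∪ {v : ℂ | f v * f z < 0} := by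
        intro v hv'
        have hvd := connectedComponentIn_subset _ _ hv'
        have : f v * f z ≠ 0 := mul_ne_zero (sfn_ne_of_diskMinus hvd hg) (hfz g hg)
        rcases this.lt_or_gt with h | h
        · right; exact h
        · left; exact h
      have hne : (connectedComponentIn (diskMinus α n) z ∩
          {v : ℂ | 0 < f v * f z}).Nonempty :=
        ⟨z, mem_connectedComponentIn hz, mul_self_pos.mpr (hfz g hg)⟩
      exact IsPreconnected.subset_left_of_subset_union hu hv hdisj hsub hne
        isPreconnected_connectedComponentIn hw
    · exact hconv.isPreconnected.subset_connectedComponentIn hzE hEsub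
  rw [hcomp]
  apply subset_antisymm
  · apply closure_minimal
    · intro w hw
      exact ⟨hw.1, fun g hg => (hw.2 g hg).le⟩
    · refine IsClosed.inter Metric.isClosed_closedBall ?_
      have hrw : {w : ℂ | ∀ g : List Bool, g.length = n →
          0 ≤ sfn (chA α g) (chB α g) w * sfn (chA α g) (chB α g) z}
          = ⋂ (g : List Bool), ⋂ (_ : g.length = n),
            {w | 0 ≤ sfn (chA α g) (chB α g) w * sfn (chA α g) (chB α g) z} := by
        ext w; simp
      rw [hrw]
      exact isClosed_iInter fun g => isClosed_iInter fun hg =>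
        isClosed_le continuous_const ((continuous_sfn _ _).mul continuous_const)
  · rintro w ⟨hwb, hwf⟩
    have hseq : ∀ k : ℕ, z + ((1 - 1/(k+1) : ℝ)) • (w - z) ∈ E := by
      intro k
      have hk0 : (0:ℝ) < 1/(k+1) := by positivity
      have hk1 : 1/((k:ℝ)+1) ≤ 1 := by
        rw [div_le_one (by positivity)]; linarith [Nat.cast_nonneg (α := ℝ) k]
      set s : ℝ := 1 - 1/(k+1) with hs
      have hs0 : 0 ≤ s := by rw [hs]; linarith
      have hs1 : s < 1 := by rw [hs]; linarith
      have hrw : z + s • (w - z) = (1-s) • z + s • w := by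
        rw [smul_sub]; module
      rw [hrw]
      constructor
      · exact convex_closedBall (0:ℂ) 1 hzb hwb (by linarith) hs0 (by ring)
      · intro g hg
        rw [sfn_affine _ _ _ _ (1-s) s (by ring)]
        have e1 := mul_self_pos.mpr (hfz g hg)
        have e2 := hwf g hg
        nlinarith [mul_nonneg hs0 e2]
    have htend : Filter.Tendsto (fun k : ℕ => z + ((1 - 1/(k+1) : ℝ)) • (w - z))
        Filter.atTop (nhds w) := by
      have h1 : Filter.Tendsto (fun k : ℕ => (1 - 1/(k+1) : ℝ)) Filter.atTop (nhds 1) := by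
        have := tendsto_one_div_add_atTop_nhds_zero_nat (𝕜 := ℝ)
        have h2 := Filter.Tendsto.const_sub (1:ℝ) this
        simpa using h2
      have h3 := Filter.Tendsto.smul_const h1 (w - z)
      have h4 := Filter.Tendsto.const_add z h3
      simpa using h4
    exact mem_closure_of_tendsto htend (Filter.Eventually.of_forall hseq)
noncomputable section
open Real

lemma sign_pivot {a b c : ℝ} (h : 0 < b * c) : (0 ≤ a * c ↔ 0 ≤ a * b) := by
  have same : (0 < b ∧ 0 < c) ∨ (b < 0 ∧ c < 0) := by
    rcases lt_trichotomy c 0 with hc|hc|hc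
    · right; refine ⟨?_, hc⟩; nlinarith
    · rw [hc, mul_zero] at h; linarith
    · left; refine ⟨?_, hc⟩; nlinarith
  rcases same with ⟨hb, hc⟩ | ⟨hb, hc⟩
  · constructor <;> intro h2
    · have ha : 0 ≤ a := by nlinarith
      exact mul_nonneg ha hb.le
    · have ha : 0 ≤ a := by nlinarith
      exact mul_nonneg ha hc.le
  · constructor <;> intro h2
    · have ha : a ≤ 0 := by nlinarith
      nlinarith
    · have ha : a ≤ 0 := by nlinarith
      nlinarith

lemma gcs_char {α : 𝕋} {n : ℕ} {C : Set 𝕋} {x : 𝕋} (hC : IsGCS α n C) (hxC : x ∈ C)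
    (hxe : ∀ g : List Bool, g.length = n →
      x ≠ wtld α g (star1 α) ∧ x ≠ wtld α g (star2 α)) :
    C = {y : 𝕋 | ∀ g : List Bool, g.length = n →
      0 ≤ sfn (chA α g) (chB α g) (emb y) * sfn (chA α g) (chB α g) (emb x)} := by
  obtain ⟨z, hz, hCdef⟩ := hC
  have hKC : C = {y : 𝕋 | ∀ g : List Bool, g.length = n →
      0 ≤ sfn (chA α g) (chB α g) (emb y) * sfn (chA α g) (chB α g) z} := by
    rw [hCdef]; ext y
    rw [Set.mem_setOf_eq, closure_component hz]
    simp only [Set.mem_inter_iff, Set.mem_setOf_eq]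
    constructor
    · exact fun h => h.2
    · exact fun h => ⟨(mem_ball_iff_abs _).mpr (le_of_eq (emb_abs y)), h⟩
  have hfz : ∀ g : List Bool, g.length = n → sfn (chA α g) (chB α g) z ≠ 0 :=
    fun g hg => sfn_ne_of_diskMinus hz hg
  have hfx : ∀ g : List Bool, g.length = n → sfn (chA α g) (chB α g) (emb x) ≠ 0 := by
    intro g hg h0
    have hseg := sfn_zero_mem_segment (emb_abs _) (emb_abs _) (chAB_ne α g)
      (le_of_eq (emb_abs x)) h0
    rcases segment_abs_one (emb_abs _) (emb_abs _) (chAB_ne α g) hseg (emb_abs x) with h|h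
    · exact (hxe g hg).1 (emb_inj h)
    · exact (hxe g hg).2 (emb_inj h)
  have hxmem : ∀ g : List Bool, g.length = n →
      0 ≤ sfn (chA α g) (chB α g) (emb x) * sfn (chA α g) (chB α g) z := by
    rw [hKC] at hxC; exact hxC
  have hpos : ∀ g : List Bool, g.length = n →
      0 < sfn (chA α g) (chB α g) (emb x) * sfn (chA α g) (chB α g) z :=
    fun g hg => lt_of_le_of_ne (hxmem g hg)
      (Ne.symm (mul_ne_zero (hfx g hg) (hfz g hg)))
  rw [hKC]; ext y; simp only [Set.mem_setOf_eq]
  exact forall_congr' fun g => imp_congr_right fun hg => sign_pivot (hpos g hg)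
noncomputable section
open Real

lemma bridgeL (a b t : ℝ) :
    sfn (EE a) (EE b) (EE t)
      = 4 * sin (π*(b-a)) * (sin (π*(t-a)) * sin (π*(t-b))) := by
  rw [sfn_EE]; ring

lemma bridgeR (a b t : ℝ) :
    sfn (EE (a+1/2)) (EE (b+1/2)) (EE t)
      = 4 * sin (π*(b-a)) * (cos (π*(t-a)) * cos (π*(t-b))) := by
  rw [sfn_EE, show π*(b+1/2-(a+1/2)) = π*(b-a) by ring,
    show π*(t-(a+1/2)) = π*(t-a) - π/2 by ring,
    show π*(t-(b+1/2)) = π*(t-b) - π/2 by ring,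
    Real.sin_sub_pi_div_two, Real.sin_sub_pi_div_two]
  ring

lemma bridgeD (a b t : ℝ) :
    sfn (EE (2*a)) (EE (2*b)) (EE (2*t))
      = 32 * (sin (π*(b-a)) * cos (π*(b-a)))
        * ((sin (π*(t-a)) * sin (π*(t-b))) * (cos (π*(t-a)) * cos (π*(t-b)))) := by
  rw [sfn_EE, show π*(2*b-2*a) = 2*(π*(b-a)) by ring,
    show π*(2*t-2*a) = 2*(π*(t-a)) by ring,
    show π*(2*t-2*b) = 2*(π*(t-b)) by ring,
    Real.sin_two_mul, Real.sin_two_mul, Real.sin_two_mul]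
  ring

lemma shift_half_S (a b t : ℝ) :
    sin (π*(t+1/2-a)) * sin (π*(t+1/2-b)) = cos (π*(t-a)) * cos (π*(t-b)) := by
  rw [show π*(t+1/2-a) = π*(t-a) + π/2 by ring, show π*(t+1/2-b) = π*(t-b) + π/2 by ring,
    Real.sin_add_pi_div_two, Real.sin_add_pi_div_two]

lemma shift_half_C (a b t : ℝ) :
    cos (π*(t+1/2-a)) * cos (π*(t+1/2-b)) = sin (π*(t-a)) * sin (π*(t-b)) := by
  rw [show π*(t+1/2-a) = π*(t-a) + π/2 by ring, show π*(t+1/2-b) = π*(t-b) + π/2 by ring,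
    Real.cos_add_pi_div_two, Real.cos_add_pi_div_two]
  ring

lemma fract_shift_S (a b u c : ℝ) :
    sin (π*(u-(c+a))) * sin (π*(u-(c+b)))
      = sin (π*(Int.fract (u-c) - a)) * sin (π*(Int.fract (u-c) - b)) := by
  have h := sin_shift_pair (Int.fract (u-c) - a) (Int.fract (u-c) - b) ⌊u - c⌋
  rw [show Int.fract (u-c) - a + (⌊u-c⌋:ℝ) = u - (c+a) by rw [Int.fract]; ring,
    show Int.fract (u-c) - b + (⌊u-c⌋:ℝ) = u - (c+b) by rw [Int.fract]; ring] at h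
  exact h

lemma fract_shift_C (a b u c : ℝ) :
    cos (π*(u-(c+a))) * cos (π*(u-(c+b)))
      = cos (π*(Int.fract (u-c) - a)) * cos (π*(Int.fract (u-c) - b)) := by
  have h := cos_shift_pair (Int.fract (u-c) - a) (Int.fract (u-c) - b) ⌊u - c⌋
  rw [show Int.fract (u-c) - a + (⌊u-c⌋:ℝ) = u - (c+a) by rw [Int.fract]; ring,
    show Int.fract (u-c) - b + (⌊u-c⌋:ℝ) = u - (c+b) by rw [Int.fract]; ring] at h
  exact h

section wrappers
variable {a b v : ℝ} (ha0 : 0 < a) (ha1 : a < 1/2) (hb0 : 0 < b) (hb1 : b < 1/2)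
  (hv0 : 0 ≤ v) (hv1 : v < 1)

include ha0 ha1 hb0 hb1 hv0 hv1 in
lemma capsemiL (hS : sin (π*(v-a)) * sin (π*(v-b)) ≤ 0) : 0 < sin (2*π*v) := by
  rcases le_total a b with h|h
  · obtain ⟨h1,h2⟩ := capL ha0 h hb1 hv0 hv1 hS
    exact semiL ha0 h hb1 h1 h2
  · rw [mul_comm] at hS
    obtain ⟨h1,h2⟩ := capL hb0 h ha1 hv0 hv1 hS
    exact semiL hb0 h ha1 h1 h2

include ha0 ha1 hb0 hb1 hv0 hv1 in
lemma capsemiR (hC : cos (π*(v-a)) * cos (π*(v-b)) ≤ 0) : sin (2*π*v) < 0 := by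
  rcases le_total a b with h|h
  · obtain ⟨h1,h2⟩ := capR ha0 h hb1 hv0 hv1 hC
    exact semiR ha0 h hb1 h1 h2
  · rw [mul_comm] at hC
    obtain ⟨h1,h2⟩ := capR hb0 h ha1 hv0 hv1 hC
    exact semiR hb0 h ha1 h1 h2

include ha0 ha1 hb0 hb1 hv0 hv1 in
lemma nostarstar :
    ¬(sin (π*(v-a)) * sin (π*(v-b)) ≤ 0 ∧ cos (π*(v-a)) * cos (π*(v-b)) ≤ 0) := by
  rintro ⟨h1, h2⟩
  rcases le_total a b with h|h
  · exact absurd (starstar ha0 h hb1 hv0 hv1 h1) (not_lt.mpr h2)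
  · rw [mul_comm] at h1 h2
    exact absurd (starstar hb0 h ha1 hv0 hv1 h1) (not_lt.mpr h2)

end wrappers

lemma cancel_sq {k s t : ℝ} (hk : k ≠ 0) (h : 0 ≤ (k*s) * (k*t)) : 0 ≤ s*t := by
  have hk2 : 0 < k^2 := by positivity
  nlinarith

lemma cancel_sq' (k : ℝ) {s t : ℝ} (h : 0 ≤ s*t) : 0 ≤ (k*s) * (k*t) := by
  nlinarith [sq_nonneg k]

lemma sinpi_ne {d : ℝ} (hd : d ≠ 0) (h1 : -(1/2) < d) (h2 : d < 1/2) : sin (π*d) ≠ 0 := by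
  rcases hd.lt_or_gt with h|h
  · exact ne_of_lt (sinpi_neg (by linarith) h)
  · exact ne_of_gt (sinpi_pos h (by linarith))

/-- All the data attached to the two level-`n` chords over a level-`n-1` chord. -/
lemma chord_facts {α : 𝕋} (hα : ¬ Periodic' α) (g' : List Bool) :
    ∃ a b : ℝ,
      (0 < a - rep α/2 ∧ a - rep α/2 < 1/2) ∧
      (0 < b - rep α/2 ∧ b - rep α/2 < 1/2) ∧
      a ≠ b ∧
      chA α (true :: g') = EE a ∧ chB α (true :: g') = EE b ∧
      chA α (false :: g') = EE (a + 1/2) ∧ chB α (false :: g') = EE (b + 1/2) ∧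
      chA α g' = EE (2*a) ∧ chB α g' = EE (2*b) ∧
      ((a : ℝ) : 𝕋) = wtld α (true :: g') (star1 α) ∧
      ((b : ℝ) : 𝕋) = wtld α (true :: g') (star2 α) ∧
      ((a + 1/2 : ℝ) : 𝕋) = wtld α (false :: g') (star1 α) ∧
      ((b + 1/2 : ℝ) : 𝕋) = wtld α (false :: g') (star2 α) := by
  set p := wtld α g' (star1 α) with hp
  set q := wtld α g' (star2 α) with hq
  have hpa : p ≠ α := wtld_star_ne_alpha hα (dbl_star1 α) g'
  have hqa : q ≠ α := wtld_star_ne_alpha hα (dbl_star2 α) g'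
  obtain ⟨τa, hτa0, hτa1, hτaeq, hRa⟩ := tld_both hpa
  obtain ⟨τb, hτb0, hτb1, hτbeq, hRb⟩ := tld_both hqa
  set a := rep (tldL α p) with ha
  set b := rep (tldL α q) with hb
  have hwt1 : wtld α (true :: g') (star1 α) = tldL α p := by
    rw [wtld_cons, ← hp]; simp [tldB]
  have hwt2 : wtld α (true :: g') (star2 α) = tldL α q := by
    rw [wtld_cons, ← hq]; simp [tldB]
  have hwf1 : wtld α (false :: g') (star1 α) = tldR α p := by
    rw [wtld_cons, ← hp]; simp [tldB]
  have hwf2 : wtld α (false :: g') (star2 α) = tldR α q := by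
    rw [wtld_cons, ← hq]; simp [tldB]
  have hpq : p ≠ q := wtld_ne α g'
  have hab : a ≠ b := by
    intro h
    apply hpq
    have h2 : tldL α p = tldL α q := by
      rw [← coe_rep (tldL α p), ← coe_rep (tldL α q), ← ha, ← hb, h]
    rw [← dbl_tldL α p, ← dbl_tldL α q, h2]
  refine ⟨a, b, ⟨by rw [hτaeq]; linarith, by rw [hτaeq]; linarith⟩,
    ⟨by rw [hτbeq]; linarith, by rw [hτbeq]; linarith⟩, hab, ?_, ?_, ?_, ?_, ?_, ?_,
    ?_, ?_, ?_, ?_⟩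
  · rw [chA, hwt1, emb_eq, ← ha]
  · rw [chB, hwt2, emb_eq, ← hb]
  · rw [chA, hwf1, hRa, emb_coe, ha]
  · rw [chB, hwf2, hRb, emb_coe, hb]
  · rw [chA, ← hp, show p = dbl (tldL α p) from (dbl_tldL α p).symm, emb_dbl, ha]
  · rw [chB, ← hq, show q = dbl (tldL α q) from (dbl_tldL α q).symm, emb_dbl, hb]
  · rw [hwt1, ha, coe_rep]
  · rw [hwt2, hb, coe_rep]
  · rw [hwf1, hRa, ha]
  · rw [hwf2, hRb, hb]

noncomputable section
open Real

lemma pi_ne' : (π:ℝ) ≠ 0 := Real.pi_ne_zero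

lemma sin_zero_int {z : ℝ} (h : sin (π*z) = 0) : ∃ k : ℤ, z = k := by
  obtain ⟨k, hk⟩ := Real.sin_eq_zero_iff.mp h
  refine ⟨k, ?_⟩
  have h2 : (k:ℝ) * π = z * π := by linarith [hk]
  have h3 := mul_right_cancel₀ pi_ne' h2
  linarith [h3]

lemma cos_zero_int {z : ℝ} (h : cos (π*z) = 0) : ∃ k : ℤ, z = k + 1/2 := by
  obtain ⟨k, hk⟩ := Real.cos_eq_zero_iff.mp h
  refine ⟨k, ?_⟩
  have h2 : π * z = (z:ℝ) * π := by ring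
  rw [h2] at hk
  have h3 : (z:ℝ) * π = ((k:ℝ) + 1/2) * π := by rw [hk]; ring
  have h4 := mul_right_cancel₀ pi_ne' h3
  linarith [h4]

/-- nonvanishing of the sine/cosine products at a non-endpoint point. -/
lemma x_nonzero {α : 𝕋} {n m : ℕ} (hm : m + 1 = n) {x : 𝕋}
    (hxe : ∀ g : List Bool, g.length = n →
      x ≠ wtld α g (star1 α) ∧ x ≠ wtld α g (star2 α))
    {g' : List Bool} (hg' : g'.length = m) {a b : ℝ}
    (hca : ((a:ℝ):𝕋) = wtld α (true :: g') (star1 α))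
    (hcb : ((b:ℝ):𝕋) = wtld α (true :: g') (star2 α))
    (hca2 : ((a + 1/2:ℝ):𝕋) = wtld α (false :: g') (star1 α))
    (hcb2 : ((b + 1/2:ℝ):𝕋) = wtld α (false :: g') (star2 α)) :
    sin (π*(rep x - a)) * sin (π*(rep x - b)) ≠ 0 ∧
    cos (π*(rep x - a)) * cos (π*(rep x - b)) ≠ 0 := by
  have hlt : (true :: g').length = n := by rw [List.length_cons, hg', hm]
  have hlf : (false :: g').length = n := by rw [List.length_cons, hg', hm]
  constructor
  · intro h
    rcases mul_eq_zero.mp h with h | h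
    · obtain ⟨k, hk⟩ := sin_zero_int h
      have hxx : x = ((a:ℝ):𝕋) := by
        rw [← coe_rep x, show rep x = a + (k:ℝ) by linarith, coe_int_add]
      exact (hxe _ hlt).1 (hxx.trans hca)
    · obtain ⟨k, hk⟩ := sin_zero_int h
      have hxx : x = ((b:ℝ):𝕋) := by
        rw [← coe_rep x, show rep x = b + (k:ℝ) by linarith, coe_int_add]
      exact (hxe _ hlt).2 (hxx.trans hcb)
  · intro h
    rcases mul_eq_zero.mp h with h | h
    · obtain ⟨k, hk⟩ := cos_zero_int h
      have hxx : x = ((a + 1/2:ℝ):𝕋) := by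
        rw [← coe_rep x, show rep x = a + 1/2 + (k:ℝ) by linarith, coe_int_add]
      exact (hxe _ hlf).1 (hxx.trans hca2)
    · obtain ⟨k, hk⟩ := cos_zero_int h
      have hxx : x = ((b + 1/2:ℝ):𝕋) := by
        rw [← coe_rep x, show rep x = b + 1/2 + (k:ℝ) by linarith, coe_int_add]
      exact (hxe _ hlf).2 (hxx.trans hcb2)

end

set_option maxHeartbeats 2000000 in
/-- generalized cylinder sets behave well under forward iteration:
`h(GCS_n(x)) = GCS_{n-1}(h(x))` (stated via the defining property of the two generalized
cylinder sets, which are unique by uniqueness of the containing member of `GCS_n`). -/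
theorem stmt_14 (α : 𝕋) (hα : ¬ Periodic' α) (n : ℕ) (hn : 1 ≤ n) (x : 𝕋)
    (hx : dbl^[n + 1] x ≠ α) (C C' : Set 𝕋)
    (hC : IsGCS α n C) (hxC : x ∈ C)
    (hC' : IsGCS α (n - 1) C') (hxC' : dbl x ∈ C') :
    dbl '' C = C' := by
  classical
  set m := n - 1 with hmdef
  have hm : m + 1 = n := Nat.succ_pred_eq_of_pos hn
  have hxe : ∀ g : List Bool, g.length = n →
      x ≠ wtld α g (star1 α) ∧ x ≠ wtld α g (star2 α) := by
    intro g hg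
    constructor <;> intro heq <;> apply hx
    · rw [heq, ← hg, Function.iterate_succ_apply', dbl_iter_wtld, dbl_star1]
    · rw [heq, ← hg, Function.iterate_succ_apply', dbl_iter_wtld, dbl_star2]
  have hxe' : ∀ g : List Bool, g.length = m →
      dbl x ≠ wtld α g (star1 α) ∧ dbl x ≠ wtld α g (star2 α) := by
    intro g hg
    constructor <;> intro heq <;> apply hx
    · have h1 : dbl^[m] (dbl x) = star1 α := by rw [heq, ← hg, dbl_iter_wtld]
      have h2 : dbl^[n] x = star1 α := by
        rw [← hm, Function.iterate_succ_apply]; exact h1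
      rw [Function.iterate_succ_apply', h2, dbl_star1]
    · have h1 : dbl^[m] (dbl x) = star2 α := by rw [heq, ← hg, dbl_iter_wtld]
      have h2 : dbl^[n] x = star2 α := by
        rw [← hm, Function.iterate_succ_apply]; exact h1
      rw [Function.iterate_succ_apply', h2, dbl_star2]
  have hCeq := gcs_char hC hxC hxe
  have hC'eq := gcs_char hC' hxC' hxe'
  apply subset_antisymm
  · -- forward direction : dbl '' C ⊆ C'
    rintro w ⟨y, hyC, rfl⟩
    rw [hCeq] at hyC
    simp only [Set.mem_setOf_eq] at hyC
    rw [hC'eq]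
    simp only [Set.mem_setOf_eq]
    intro g' hg'
    obtain ⟨a, b, ⟨ha0,ha1⟩, ⟨hb0,hb1⟩, hab, hAt, hBt, hAf, hBf, hAd, hBd,
      _, _, _, _⟩ := chord_facts hα g'
    have hd : sin (π*(b-a)) ≠ 0 :=
      sinpi_ne (sub_ne_zero.mpr (Ne.symm hab)) (by linarith) (by linarith)
    have hS := hyC (true :: g') (by rw [List.length_cons, hg', hm])
    have hCc := hyC (false :: g') (by rw [List.length_cons, hg', hm])
    rw [hAt, hBt, emb_eq y, emb_eq x, bridgeL, bridgeL] at hS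
    rw [hAf, hBf, emb_eq y, emb_eq x, bridgeR, bridgeR] at hCc
    have hS' := cancel_sq (mul_ne_zero (by norm_num) hd) hS
    have hC'' := cancel_sq (mul_ne_zero (by norm_num) hd) hCc
    rw [hAd, hBd, emb_dbl, emb_dbl, bridgeD, bridgeD]
    apply cancel_sq' (32 * (sin (π*(b-a)) * cos (π*(b-a))))
    have h2 := mul_nonneg hS' hC''
    have h3 : (sin (π*(rep y - a)) * sin (π*(rep y - b)))
        * (sin (π*(rep x - a)) * sin (π*(rep x - b)))
        * ((cos (π*(rep y - a)) * cos (π*(rep y - b)))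
          * (cos (π*(rep x - a)) * cos (π*(rep x - b))))
        = (sin (π*(rep y - a)) * sin (π*(rep y - b))
            * (cos (π*(rep y - a)) * cos (π*(rep y - b))))
          * (sin (π*(rep x - a)) * sin (π*(rep x - b))
            * (cos (π*(rep x - a)) * cos (π*(rep x - b)))) := by
      ring
    rw [h3] at h2
    exact h2
  · -- backward direction : C' ⊆ dbl '' C
    intro w hwC'
    rw [hC'eq] at hwC'
    simp only [Set.mem_setOf_eq] at hwC'
    have hwm := rep_mem w
    simp only [Set.mem_Ico] at hwm
    set th := rep w / 2 with hth
    set vt := Int.fract (th - rep α/2) with hvtdef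
    have hvt0 : 0 ≤ vt := Int.fract_nonneg _
    have hvt1 : vt < 1 := Int.fract_lt_one _
    set vx := Int.fract (rep x - rep α/2) with hvxdef
    have hvx0 : 0 ≤ vx := Int.fract_nonneg _
    have hvx1 : vx < 1 := Int.fract_lt_one _
    have hdy0 : dbl ((th : ℝ) : 𝕋) = w := by
      rw [dbl_coe, show 2*th = rep w by rw [hth]; ring, coe_rep]
    have hdy1 : dbl ((th + 1/2 : ℝ) : 𝕋) = w := by
      rw [dbl_coe, show 2*(th+1/2) = rep w + ((1:ℤ):ℝ) by push_cast; rw [hth]; ring,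
        coe_int_add, coe_rep]
    have hey0 : emb ((th : ℝ) : 𝕋) = EE th := emb_coe th
    have hey1 : emb ((th + 1/2 : ℝ) : 𝕋) = EE (th + 1/2) := emb_coe _
    have hw2t : emb w = EE (2*th) := by
      rw [emb_eq]; congr 1; rw [hth]; ring
    have master : ∀ g' : List Bool, g'.length = m → ∀ ε : Bool,
        (¬ (∀ b : Bool, 0 ≤ sfn (chA α (b :: g')) (chB α (b :: g'))
              (EE (cond ε (th + 1/2) th))
            * sfn (chA α (b :: g')) (chB α (b :: g')) (emb x))) →
        (cond ε
          ((0 < sin (2*π*vx) ∧ 0 < sin (2*π*vt)) ∨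
            (sin (2*π*vx) < 0 ∧ sin (2*π*vt) < 0))
          ((0 < sin (2*π*vx) ∧ sin (2*π*vt) < 0) ∨
            (sin (2*π*vx) < 0 ∧ 0 < sin (2*π*vt)))) := by
      intro g' hg' ε hfail
      obtain ⟨a, b, ⟨ha0,ha1⟩, ⟨hb0,hb1⟩, hab, hAt, hBt, hAf, hBf, hAd, hBd,
        hca, hcb, hca2, hcb2⟩ := chord_facts hα g'
      have hd : sin (π*(b-a)) ≠ 0 :=
        sinpi_ne (sub_ne_zero.mpr (Ne.symm hab)) (by linarith) (by linarith)
      have hdc : 0 < cos (π*(b-a)) := cospi_pos (by linarith) (by linarith)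
      have hSx : sin (π*(rep x - a)) * sin (π*(rep x - b))
          = sin (π*(vx - (a-rep α/2))) * sin (π*(vx - (b-rep α/2))) := by
        have h := fract_shift_S (a-rep α/2) (b-rep α/2) (rep x) (rep α/2)
        rw [show rep α/2 + (a-rep α/2) = a by ring,
          show rep α/2 + (b-rep α/2) = b by ring] at h
        rw [h, hvxdef]
      have hCx : cos (π*(rep x - a)) * cos (π*(rep x - b))
          = cos (π*(vx - (a-rep α/2))) * cos (π*(vx - (b-rep α/2))) := by
        have h := fract_shift_C (a-rep α/2) (b-rep α/2) (rep x) (rep α/2)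
        rw [show rep α/2 + (a-rep α/2) = a by ring,
          show rep α/2 + (b-rep α/2) = b by ring] at h
        rw [h, hvxdef]
      have hSt : sin (π*(th - a)) * sin (π*(th - b))
          = sin (π*(vt - (a-rep α/2))) * sin (π*(vt - (b-rep α/2))) := by
        have h := fract_shift_S (a-rep α/2) (b-rep α/2) th (rep α/2)
        rw [show rep α/2 + (a-rep α/2) = a by ring,
          show rep α/2 + (b-rep α/2) = b by ring] at h
        rw [h, hvtdef]
      have hCt : cos (π*(th - a)) * cos (π*(th - b))
          = cos (π*(vt - (a-rep α/2))) * cos (π*(vt - (b-rep α/2))) := by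
        have h := fract_shift_C (a-rep α/2) (b-rep α/2) th (rep α/2)
        rw [show rep α/2 + (a-rep α/2) = a by ring,
          show rep α/2 + (b-rep α/2) = b by ring] at h
        rw [h, hvtdef]
      have hH0 := hwC' g' hg'
      rw [hAd, hBd, hw2t, emb_dbl, bridgeD, bridgeD] at hH0
      have hH1 := cancel_sq (k := 32 * (sin (π*(b-a)) * cos (π*(b-a))))
        (mul_ne_zero (by norm_num) (mul_ne_zero hd (ne_of_gt hdc))) hH0
      rw [hSt, hCt, hSx, hCx] at hH1
      set st := sin (π*(vt - (a-rep α/2))) * sin (π*(vt - (b-rep α/2))) with hstd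
      set ct := cos (π*(vt - (a-rep α/2))) * cos (π*(vt - (b-rep α/2))) with hctd
      set sx := sin (π*(vx - (a-rep α/2))) * sin (π*(vx - (b-rep α/2))) with hsxd
      set cx := cos (π*(vx - (a-rep α/2))) * cos (π*(vx - (b-rep α/2))) with hcxd
      have hH : 0 ≤ st * ct * sx * cx := by nlinarith [hH1]
      obtain ⟨hsx0, hcx0⟩ := x_nonzero hm hxe hg' hca hcb hca2 hcb2
      rw [hSx] at hsx0
      rw [hCx] at hcx0
      have hxstar : ¬(sx ≤ 0 ∧ cx ≤ 0) := by
        rw [hsxd, hcxd]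
        exact nostarstar (by linarith) (by linarith) (by linarith) (by linarith)
          hvx0 hvx1
      have htstar : ¬(st ≤ 0 ∧ ct ≤ 0) := by
        rw [hstd, hctd]
        exact nostarstar (by linarith) (by linarith) (by linarith) (by linarith)
          hvt0 hvt1
      cases ε
      · -- failure at th
        simp only [Bool.cond_false] at hfail ⊢
        push_neg at hfail
        obtain ⟨bb, hbb⟩ := hfail
        replace hbb := not_le.mpr hbb
        have hfail2 : ¬(0 ≤ st*sx ∧ 0 ≤ ct*cx) := by
          rintro ⟨h1, h2⟩
          apply hbb
          cases bb
          · rw [hAf, hBf, emb_eq x, bridgeR, bridgeR]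
            exact cancel_sq' _ (by rw [hCt, hCx]; exact h2)
          · rw [hAt, hBt, emb_eq x, bridgeL, bridgeL]
            exact cancel_sq' _ (by rw [hSt, hSx]; exact h1)
        rcases KPC hsx0 hcx0 hxstar htstar hH hfail2 with ⟨h1, h2⟩ | ⟨h1, h2⟩
        · left
          refine ⟨?_, ?_⟩
          · exact capsemiL (a := a-rep α/2) (b := b-rep α/2) (by linarith) (by linarith)
              (by linarith) (by linarith) hvx0 hvx1 (by rw [← hsxd]; linarith)
          · exact capsemiR (a := a-rep α/2) (b := b-rep α/2) (by linarith) (by linarith)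
              (by linarith) (by linarith) hvt0 hvt1 (by rw [← hctd]; linarith)
        · right
          refine ⟨?_, ?_⟩
          · exact capsemiR (a := a-rep α/2) (b := b-rep α/2) (by linarith) (by linarith)
              (by linarith) (by linarith) hvx0 hvx1 (by rw [← hcxd]; linarith)
          · exact capsemiL (a := a-rep α/2) (b := b-rep α/2) (by linarith) (by linarith)
              (by linarith) (by linarith) hvt0 hvt1 (by rw [← hstd]; linarith)
      · -- failure at th + 1/2
        simp only [Bool.cond_true] at hfail ⊢
        push_neg at hfail
        obtain ⟨bb, hbb⟩ := hfail
        replace hbb := not_le.mpr hbb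
        have hfail2 : ¬(0 ≤ ct*sx ∧ 0 ≤ st*cx) := by
          rintro ⟨h1, h2⟩
          apply hbb
          cases bb
          · rw [hAf, hBf, emb_eq x, bridgeR, bridgeR, shift_half_C]
            exact cancel_sq' _ (by rw [hSt, hCx]; exact h2)
          · rw [hAt, hBt, emb_eq x, bridgeL, bridgeL, shift_half_S]
            exact cancel_sq' _ (by rw [hCt, hSx]; exact h1)
        have htstar' : ¬(ct ≤ 0 ∧ st ≤ 0) := fun h => htstar ⟨h.2, h.1⟩
        have hH' : 0 ≤ ct * st * sx * cx := by nlinarith [hH]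
        rcases KPC hsx0 hcx0 hxstar htstar' hH' hfail2 with ⟨h1, h2⟩ | ⟨h1, h2⟩
        · left
          refine ⟨?_, ?_⟩
          · exact capsemiL (a := a-rep α/2) (b := b-rep α/2) (by linarith) (by linarith)
              (by linarith) (by linarith) hvx0 hvx1 (by rw [← hsxd]; linarith)
          · exact capsemiL (a := a-rep α/2) (b := b-rep α/2) (by linarith) (by linarith)
              (by linarith) (by linarith) hvt0 hvt1 (by rw [← hstd]; linarith)
        · right
          refine ⟨?_, ?_⟩
          · exact capsemiR (a := a-rep α/2) (b := b-rep α/2) (by linarith) (by linarith)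
              (by linarith) (by linarith) hvx0 hvx1 (by rw [← hcxd]; linarith)
          · exact capsemiR (a := a-rep α/2) (b := b-rep α/2) (by linarith) (by linarith)
              (by linarith) (by linarith) hvt0 hvt1 (by rw [← hctd]; linarith)
    by_cases h0 : ((th : ℝ) : 𝕋) ∈ C
    · exact ⟨_, h0, hdy0⟩
    · refine ⟨_, ?_, hdy1⟩
      rw [hCeq] at h0
      simp only [Set.mem_setOf_eq] at h0
      push_neg at h0
      obtain ⟨g0, hg0len, hg0fail⟩ := h0
      obtain ⟨b0, g0', rfl⟩ : ∃ b0 g0', g0 = b0 :: g0' := by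
        cases g0 with
        | nil => exfalso; rw [List.length_nil] at hg0len; omega
        | cons bq tq => exact ⟨bq, tq, rfl⟩
      have hg0' : g0'.length = m := by
        rw [List.length_cons] at hg0len; omega
      rw [hey0] at hg0fail
      have hA' := master g0' hg0' false
        (fun hall => absurd (hall b0) (not_le.mpr hg0fail))
      simp only [Bool.cond_false] at hA'
      rw [hCeq]
      simp only [Set.mem_setOf_eq]
      intro g hg
      by_contra hfail1
      obtain ⟨b1, g1', rfl⟩ : ∃ b1 g1', g = b1 :: g1' := by
        cases g with
        | nil => exfalso; rw [List.length_nil] at hg; omega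
        | cons bq tq => exact ⟨bq, tq, rfl⟩
      have hg1' : g1'.length = m := by
        rw [List.length_cons] at hg; omega
      rw [hey1] at hfail1
      have hB' := master g1' hg1' true (fun hall => hfail1 (hall b1))
      simp only [Bool.cond_true] at hB'
      rcases hA' with ⟨hx1, ht1⟩ | ⟨hx1, ht1⟩ <;>
        rcases hB' with ⟨hx2, ht2⟩ | ⟨hx2, ht2⟩ <;> linarith
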